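/- Let n be even with n ≡ 2 or 6 (mod 8), let l be an integer with 0 ≤ l ≤ (n−2)/4, and set k = n − 1 − l. Then for every state η̂ of Ω_n ⊗_max Ω_n and all i, j ∈ {0,…,n−1}, C[η̂; E_n(i),E_n(j); E_n(k),E_n(l)] ≤ 2 r_n² [cos((2l+1)θ_n) + cos θ_n · sin((2l+1)θ_n)]. -/

import Mathlib

noncomputable section

/-- Standard inner product on `ℝ³`. -/
def dot3 (v w : Fin 3 → ℝ) : ℝ := ∑ i, v i * w i

/-- The angle `θ_n = π / n`. -/
def thetaN (n : ℕ) : ℝ := Real.pi / n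

/-- `r_n = (cos θ_n)^{-1/2}`. -/
def rN (n : ℕ) : ℝ := Real.sqrt (Real.cos (thetaN n))⁻¹

/-- `R_n = 1 / (1 + r_n²)`. -/
def RN (n : ℕ) : ℝ := 1 / (1 + rN n ^ 2)

/-- The pure states `ω_n(i)` of the regular polygon theory. -/
def omegaN (n i : ℕ) : Fin 3 → ℝ :=
  ![rN n * Real.cos (2 * (i : ℝ) * thetaN n), rN n * Real.sin (2 * (i : ℝ) * thetaN n), 1]

/-- The state space `Ω_n`, the convex hull of the pure states. -/
def OmegaN (n : ℕ) : Set (Fin 3 → ℝ) :=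
  convexHull ℝ {v | ∃ i < n, v = omegaN n i}

/-- The unit effect `u = (0,0,1)`. -/
def uEff : Fin 3 → ℝ := ![0, 0, 1]

/-- The pure effects `e_n(i)` (separate formulas for even and odd `n`). -/
def eN (n i : ℕ) : Fin 3 → ℝ :=
  if Even n then
    (1 / 2 : ℝ) • ![rN n * Real.cos ((2 * (i : ℝ) + 1) * thetaN n),
                    rN n * Real.sin ((2 * (i : ℝ) + 1) * thetaN n), 1]
  else
    RN n • ![rN n * Real.cos (2 * (i : ℝ) * thetaN n),
             rN n * Real.sin (2 * (i : ℝ) * thetaN n), 1]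

/-- The complementary effect `ē_n(i) = u - e_n(i)`. -/
def eBarN (n i : ℕ) : Fin 3 → ℝ := uEff - eN n i

/-- The effect space `E_n`. -/
def EffN (n : ℕ) : Set (Fin 3 → ℝ) :=
  {f | ∀ ω ∈ OmegaN n, dot3 f ω ∈ Set.Icc (0 : ℝ) 1}

/-- The positive cone `V_{n+}` generated by the state space. -/
def VposN (n : ℕ) : Set (Fin 3 → ℝ) :=
  {x | ∃ c : ℝ, 0 ≤ c ∧ ∃ ω ∈ OmegaN n, x = c • ω}

/-- The dual cone `V*_{n+}` generated by the effect space. -/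
def VdualN (n : ℕ) : Set (Fin 3 → ℝ) :=
  {x | ∃ c : ℝ, 0 ≤ c ∧ ∃ f ∈ EffN n, x = c • f}

/-- A state of `Ω_n ⊗_max Ω_n`, identified with a normalized cone-preserving linear map. -/
def IsState (n : ℕ) (η : (Fin 3 → ℝ) →ₗ[ℝ] (Fin 3 → ℝ)) : Prop :=
  (∀ x ∈ VdualN n, η x ∈ VposN n) ∧ dot3 uEff (η uEff) = 1

/-- A binary observable on `Ω_n`: a pair of effects summing to the unit effect. -/
def IsObservable (n : ℕ) (A : (Fin 3 → ℝ) × (Fin 3 → ℝ)) : Prop :=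
  A.1 ∈ EffN n ∧ A.2 ∈ EffN n ∧ A.1 + A.2 = uEff

/-- The observable `E_n(i) = (e_n(i), ē_n(i))`. -/
def EObs (n i : ℕ) : (Fin 3 → ℝ) × (Fin 3 → ℝ) := (eN n i, eBarN n i)

/-- The correlator `E(st) = Σ_{a,b} (-1)^{a+b} ⟨B^b, η(A^a)⟩`. -/
def corr (η : (Fin 3 → ℝ) →ₗ[ℝ] (Fin 3 → ℝ)) (A B : (Fin 3 → ℝ) × (Fin 3 → ℝ)) : ℝ :=
  dot3 B.1 (η A.1) - dot3 B.2 (η A.1) - dot3 B.1 (η A.2) + dot3 B.2 (η A.2)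

/-- The CHSH value `C[η; A₀,A₁; B₀,B₁] = E(00) + E(01) + E(10) - E(11)`. -/
def CHSH (η : (Fin 3 → ℝ) →ₗ[ℝ] (Fin 3 → ℝ))
    (A0 A1 B0 B1 : (Fin 3 → ℝ) × (Fin 3 → ℝ)) : ℝ :=
  corr η A0 B0 + corr η A0 B1 + corr η A1 B0 - corr η A1 B1

/-- `GL(Ω_n)`: linear bijections of `ℝ³` preserving the state space. -/
def GLOmega (n : ℕ) : Set ((Fin 3 → ℝ) →ₗ[ℝ] (Fin 3 → ℝ)) :=
  {T | Function.Bijective T ∧ T '' OmegaN n = OmegaN n}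

/-- The order isomorphism `T_n`: a rotation by `θ_n` for even `n`, the identity for odd `n`. -/
def TN (n : ℕ) : (Fin 3 → ℝ) →ₗ[ℝ] (Fin 3 → ℝ) :=
  if Even n then
    Matrix.toLin' !![Real.cos (thetaN n), Real.sin (thetaN n), 0;
                     -Real.sin (thetaN n), Real.cos (thetaN n), 0;
                     0, 0, 1]
  else LinearMap.id

/-- Maximally entangled states: elements of `T_n · GL(Ω_n)`. -/
def MaxEnt (n : ℕ) (η : (Fin 3 → ℝ) →ₗ[ℝ] (Fin 3 → ℝ)) : Prop :=
  ∃ T ∈ GLOmega n, η = (TN n).comp T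


open Real

lemma sin_succ_mul_nonneg (N : ℕ) (hN : 0 < N) (k : ℤ) :
    0 ≤ Real.sin ((k:ℝ) * (π / N)) * Real.sin (((k:ℝ) + 1) * (π / N)) := by
  set θ := π / (N:ℝ) with hθdef
  have hN0 : (N:ℝ) ≠ 0 := Nat.cast_ne_zero.2 hN.ne'
  have hθ0 : 0 ≤ θ := by positivity
  have hNθ : (N:ℝ) * θ = π := by rw [hθdef]; field_simp
  set s : ℤ := k % N with hs
  set t : ℤ := k / N with ht
  have hk : (N:ℤ) * t + s = k := Int.mul_ediv_add_emod k N
  have hs0 : 0 ≤ s := Int.emod_nonneg k (by exact_mod_cast hN.ne')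
  have hsN : s < N := Int.emod_lt_of_pos k (by exact_mod_cast hN)
  have e1 : (k:ℝ) * θ = (s:ℝ) * θ + (t:ℝ) * π := by
    have : (k:ℝ) = N * t + s := by exact_mod_cast hk.symm
    rw [this]; rw [← hNθ]; ring
  have e2 : ((k:ℝ) + 1) * θ = ((s:ℝ) + 1) * θ + (t:ℝ) * π := by
    have : (k:ℝ) = N * t + s := by exact_mod_cast hk.symm
    rw [this]; rw [← hNθ]; ring
  rw [e1, e2, Real.sin_add_int_mul_pi, Real.sin_add_int_mul_pi]
  have hsq : ((-1:ℝ) ^ t) * ((-1:ℝ) ^ t) = 1 := by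
    rw [← zpow_add₀ (by norm_num : (-1:ℝ) ≠ 0), ← two_mul, zpow_mul]
    norm_num
  have h1 : 0 ≤ Real.sin ((s:ℝ) * θ) := by
    apply Real.sin_nonneg_of_nonneg_of_le_pi
    · positivity
    · rw [← hNθ]
      apply mul_le_mul_of_nonneg_right _ hθ0
      exact_mod_cast hsN.le
  have h2 : 0 ≤ Real.sin (((s:ℝ) + 1) * θ) := by
    apply Real.sin_nonneg_of_nonneg_of_le_pi
    · positivity
    · rw [← hNθ]
      apply mul_le_mul_of_nonneg_right _ hθ0
      have : s + 1 ≤ (N:ℤ) := hsN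
      exact_mod_cast this
  calc (0:ℝ) ≤ (((-1:ℝ)^t) * ((-1:ℝ)^t)) * (Real.sin ((s:ℝ)*θ) * Real.sin (((s:ℝ)+1)*θ)) := by
        rw [hsq, one_mul]; exact mul_nonneg h1 h2
    _ = (-1:ℝ)^t * Real.sin ((s:ℝ)*θ) * ((-1:ℝ)^t * Real.sin (((s:ℝ)+1)*θ)) := by ring

lemma cos_odd_le (n : ℕ) (hn : 0 < n) (k : ℤ) :
    Real.cos ((2*(k:ℝ)+1) * (π/n)) ≤ Real.cos (π/n) := by
  have h := sin_succ_mul_nonneg n hn k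
  have hc := Real.cos_sub_cos (π/(n:ℝ)) ((2*(k:ℝ)+1) * (π/n))
  have e1 : (π/(n:ℝ) + (2*(k:ℝ)+1)*(π/n))/2 = ((k:ℝ)+1)*(π/n) := by ring
  have e2 : (π/(n:ℝ) - (2*(k:ℝ)+1)*(π/n))/2 = -((k:ℝ)*(π/n)) := by ring
  rw [e1, e2, Real.sin_neg] at hc
  nlinarith [h]

lemma neg_cos_le_odd (n : ℕ) (hn : 0 < n) (heven : n % 2 = 0) (k : ℤ) :
    -Real.cos (π/n) ≤ Real.cos ((2*(k:ℝ)+1) * (π/n)) := by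
  obtain ⟨m, rfl⟩ : ∃ m, n = 2*m := ⟨n/2, by omega⟩
  have hm : 0 < m := by omega
  have h := cos_odd_le (2*m) hn (k + m)
  have e : (2*((k:ℝ)+(m:ℝ))+1) * (π/((2*m:ℕ):ℝ)) = (2*(k:ℝ)+1)*(π/((2*m:ℕ):ℝ)) + π := by
    have hm0 : ((2*m:ℕ):ℝ) ≠ 0 := by positivity
    field_simp
    push_cast; ring
  have ecast : ((k + (m:ℤ) : ℤ):ℝ) = (k:ℝ) + (m:ℝ) := by push_cast; ring
  rw [ecast, e, Real.cos_add_pi] at h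
  linarith

lemma abs_cos_odd_le (n : ℕ) (hn : 0 < n) (heven : n % 2 = 0) (k : ℤ) :
    |Real.cos ((2*(k:ℝ)+1) * (π/n))| ≤ Real.cos (π/n) :=
  abs_le.2 ⟨neg_cos_le_odd n hn heven k, cos_odd_le n hn k⟩

lemma abs_sin_even_le (n : ℕ) (hn4 : n % 4 = 2) (i : ℤ) :
    |Real.sin (2*(i:ℝ) * (π/n))| ≤ Real.cos (π/n) := by
  obtain ⟨p, hp⟩ : ∃ p, n = 2*(2*p+1) := ⟨(n-2)/4, by omega⟩
  have hn : 0 < n := by omega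
  have hn0 : (n:ℝ) ≠ 0 := Nat.cast_ne_zero.2 hn.ne'
  have harg : 2*(i:ℝ) * (π/n) = π/2 - (2*((p:ℝ)-(i:ℝ))+1) * (π/n) := by
    have hhalf : ((2*p+1:ℕ):ℝ) * (π/n) = π/2 := by
      rw [hp]; push_cast
      field_simp
    push_cast at hhalf ⊢
    linarith [hhalf]
  rw [harg, Real.sin_pi_div_two_sub]
  have := abs_cos_odd_le n hn (by omega) ((p:ℤ) - i)
  push_cast at this
  exact this

lemma dot3_comp (f v : Fin 3 → ℝ) : dot3 f v = f 0 * v 0 + f 1 * v 1 + f 2 * v 2 := by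
  simp [dot3, Fin.sum_univ_three]

lemma cosθ_nonneg (n : ℕ) (hn : 2 ≤ n) : 0 ≤ Real.cos (thetaN n) := by
  unfold thetaN
  apply Real.cos_nonneg_of_mem_Icc
  constructor
  · have : (0:ℝ) ≤ π / n := by positivity
    linarith [Real.pi_pos]
  · rw [div_le_div_iff₀ (by positivity) (by norm_num)]
    have : (2:ℝ) ≤ n := by exact_mod_cast hn
    nlinarith [Real.pi_pos]

lemma rN_nonneg (n : ℕ) : 0 ≤ rN n := Real.sqrt_nonneg _

lemma rN_sq (n : ℕ) (hn : 2 ≤ n) : rN n ^ 2 = (Real.cos (thetaN n))⁻¹ := by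
  rw [rN, sq, Real.mul_self_sqrt (inv_nonneg.2 (cosθ_nonneg n hn))]

lemma rN_sq_mul_cos_le_one (n : ℕ) (hn : 2 ≤ n) :
    rN n ^ 2 * Real.cos (thetaN n) ≤ 1 := by
  rw [rN_sq n hn]
  rcases eq_or_lt_of_le (cosθ_nonneg n hn) with h | h
  · rw [← h]; norm_num
  · rw [inv_mul_cancel₀ h.ne']

/-- Bounds satisfied by every state in `Ω_n` (for `n ≡ 2 mod 4`). -/
lemma omega_bound (n : ℕ) (hn4 : n % 4 = 2) :
    ∀ ω ∈ OmegaN n, ω 2 = 1 ∧ |ω 0| ≤ rN n ∧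
      |ω 1| ≤ rN n * Real.cos (thetaN n) := by
  have hn : 2 ≤ n := by omega
  have hr := rN_nonneg n
  have hc := cosθ_nonneg n hn
  intro ω hω
  have key : OmegaN n ⊆ {v : Fin 3 → ℝ | v 2 = 1 ∧ |v 0| ≤ rN n ∧
      |v 1| ≤ rN n * Real.cos (thetaN n)} := by
    refine convexHull_min ?_ ?_
    · rintro v ⟨i, hi, rfl⟩
      refine ⟨by simp [omegaN], ?_, ?_⟩
      · rw [show omegaN n i 0 = rN n * Real.cos (2*(i:ℝ)*thetaN n) by simp [omegaN]]
        rw [abs_mul, abs_of_nonneg hr]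
        calc rN n * |Real.cos (2*(i:ℝ)*thetaN n)| ≤ rN n * 1 :=
              mul_le_mul_of_nonneg_left (Real.abs_cos_le_one _) hr
          _ = rN n := mul_one _
      · rw [show omegaN n i 1 = rN n * Real.sin (2*(i:ℝ)*thetaN n) by simp [omegaN]]
        rw [abs_mul, abs_of_nonneg hr]
        apply mul_le_mul_of_nonneg_left _ hr
        have := abs_sin_even_le n hn4 (i : ℤ)
        push_cast at this
        exact this
    · intro x hx y hy a b ha hb hab
      obtain ⟨hx2, hx0, hx1⟩ := hx
      obtain ⟨hy2, hy0, hy1⟩ := hy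
      refine ⟨?_, ?_, ?_⟩
      · simp only [Pi.add_apply, Pi.smul_apply, smul_eq_mul, hx2, hy2]; linarith
      · simp only [Pi.add_apply, Pi.smul_apply, smul_eq_mul]
        calc |a * x 0 + b * y 0| ≤ |a * x 0| + |b * y 0| := abs_add_le _ _
          _ = a * |x 0| + b * |y 0| := by rw [abs_mul, abs_mul, abs_of_nonneg ha, abs_of_nonneg hb]
          _ ≤ a * rN n + b * rN n := by
              exact add_le_add (mul_le_mul_of_nonneg_left hx0 ha) (mul_le_mul_of_nonneg_left hy0 hb)
          _ = rN n := by rw [← add_mul, hab, one_mul]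
      · simp only [Pi.add_apply, Pi.smul_apply, smul_eq_mul]
        calc |a * x 1 + b * y 1| ≤ |a * x 1| + |b * y 1| := abs_add_le _ _
          _ = a * |x 1| + b * |y 1| := by rw [abs_mul, abs_mul, abs_of_nonneg ha, abs_of_nonneg hb]
          _ ≤ a * (rN n * Real.cos (thetaN n)) + b * (rN n * Real.cos (thetaN n)) := by
              exact add_le_add (mul_le_mul_of_nonneg_left hx1 ha) (mul_le_mul_of_nonneg_left hy1 hb)
          _ = rN n * Real.cos (thetaN n) := by rw [← add_mul, hab, one_mul]
  exact key hω

lemma vpos_bound (n : ℕ) (hn4 : n % 4 = 2) :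
    ∀ v ∈ VposN n, 0 ≤ v 2 ∧ |v 0| ≤ rN n * v 2 ∧
      |v 1| ≤ rN n * Real.cos (thetaN n) * v 2 := by
  rintro v ⟨c, hc, ω, hω, rfl⟩
  obtain ⟨h2, h0, h1⟩ := omega_bound n hn4 ω hω
  simp only [Pi.smul_apply, smul_eq_mul, h2, mul_one]
  refine ⟨hc, ?_, ?_⟩
  · rw [abs_mul, abs_of_nonneg hc, mul_comm (rN n) c]
    exact mul_le_mul_of_nonneg_left h0 hc
  · rw [abs_mul, abs_of_nonneg hc, mul_comm _ c]
    exact mul_le_mul_of_nonneg_left h1 hc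

lemma dot_convex (f : Fin 3 → ℝ) : Convex ℝ {v : Fin 3 → ℝ | dot3 f v ∈ Set.Icc (0:ℝ) 1} := by
  intro x hx y hy a b ha hb hab
  obtain ⟨hx0, hx1⟩ := hx
  obtain ⟨hy0, hy1⟩ := hy
  have e : dot3 f (a • x + b • y) = a * dot3 f x + b * dot3 f y := by
    simp only [dot3_comp, Pi.add_apply, Pi.smul_apply, smul_eq_mul]; ring
  constructor
  · rw [e]; positivity
  · rw [e]
    calc a * dot3 f x + b * dot3 f y ≤ a * 1 + b * 1 :=
          add_le_add (mul_le_mul_of_nonneg_left hx1 ha) (mul_le_mul_of_nonneg_left hy1 hb)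
      _ = 1 := by linarith

lemma uEff_mem (n : ℕ) (hn4 : n % 4 = 2) : uEff ∈ EffN n := by
  intro ω hω
  have h2 := (omega_bound n hn4 ω hω).1
  constructor <;> simp [dot3_comp, uEff, h2]

lemma eN_mem (n : ℕ) (hn4 : n % 4 = 2) (i : ℕ) : eN n i ∈ EffN n := by
  have hn : 2 ≤ n := by omega
  have hEven : Even n := Nat.even_iff.2 (by omega)
  intro ω hω
  have key : {v : Fin 3 → ℝ | ∃ j < n, v = omegaN n j} ⊆
      {v : Fin 3 → ℝ | dot3 (eN n i) v ∈ Set.Icc (0:ℝ) 1} := by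
    rintro v ⟨j, hj, rfl⟩
    have harg : (2*((i:ℝ)-(j:ℝ))+1)*(thetaN n) = (2*(i:ℝ)+1)*(thetaN n) - 2*(j:ℝ)*(thetaN n) := by
      ring
    have hval : dot3 (eN n i) (omegaN n j)
        = (rN n ^ 2 * Real.cos ((2*((i:ℝ)-(j:ℝ))+1)*(thetaN n)) + 1)/2 := by
      simp only [dot3_comp, eN, if_pos hEven, omegaN, Pi.smul_apply, smul_eq_mul,
        Matrix.cons_val_zero, Matrix.cons_val_one, Matrix.head_cons]
      rw [harg, Real.cos_sub]
      have h2 : (![rN n * Real.cos (2*(j:ℝ)*thetaN n), rN n * Real.sin (2*(j:ℝ)*thetaN n), 1] : Fin 3 → ℝ) 2 = 1 := rfl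
      have h2' : (![rN n * Real.cos ((2*(i:ℝ)+1)*thetaN n), rN n * Real.sin ((2*(i:ℝ)+1)*thetaN n), 1] : Fin 3 → ℝ) 2 = 1 := rfl
      rw [h2, h2']
      ring
    have habs : |rN n ^ 2 * Real.cos ((2*((i:ℝ)-(j:ℝ))+1)*(thetaN n))| ≤ 1 := by
      rw [abs_mul, abs_of_nonneg (by positivity : (0:ℝ) ≤ rN n ^ 2)]
      calc rN n ^ 2 * |Real.cos ((2*((i:ℝ)-(j:ℝ))+1)*(thetaN n))|
          ≤ rN n ^ 2 * Real.cos (thetaN n) := by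
            apply mul_le_mul_of_nonneg_left _ (by positivity)
            have := abs_cos_odd_le n (by omega) (by omega) ((i:ℤ) - (j:ℤ))
            push_cast at this
            exact this
        _ ≤ 1 := rN_sq_mul_cos_le_one n hn
    rw [Set.mem_setOf_eq, hval]
    have := abs_le.1 habs
    constructor <;> [linarith [this.1]; linarith [this.2]]
  exact convexHull_min key (dot_convex _) hω

lemma eBarN_mem (n : ℕ) (hn4 : n % 4 = 2) (i : ℕ) : eBarN n i ∈ EffN n := by
  intro ω hω
  have h1 := eN_mem n hn4 i ω hω
  have h2 : dot3 uEff ω = 1 := by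
    rw [dot3_comp]; simp [uEff, (omega_bound n hn4 ω hω).1]
  have e : dot3 (eBarN n i) ω = dot3 uEff ω - dot3 (eN n i) ω := by
    simp only [dot3_comp, eBarN, Pi.sub_apply]; ring
  rw [Set.mem_Icc] at *
  rw [e, h2]
  constructor <;> [linarith [h1.2]; linarith [h1.1]]

/-- for even `n ≡ 2, 6 (mod 8)`, `0 ≤ l ≤ (n−2)/4` and `k = n − 1 − l`,
the CHSH value of any state with observables `E_n(i), E_n(j); E_n(k), E_n(l)` is bounded
by `2 r_n² [cos((2l+1)θ_n) + cos θ_n · sin((2l+1)θ_n)]`. -/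
theorem CHSH_upper_bound_even (n : ℕ) (hmod : n % 8 = 2 ∨ n % 8 = 6)
    (l : ℕ) (hl : l ≤ (n - 2) / 4) :
    ∀ η : (Fin 3 → ℝ) →ₗ[ℝ] (Fin 3 → ℝ), IsState n η →
      ∀ i < n, ∀ j < n,
        CHSH η (EObs n i) (EObs n j) (EObs n (n - 1 - l)) (EObs n l) ≤
          2 * rN n ^ 2 * (Real.cos ((2 * (l : ℝ) + 1) * thetaN n)
            + Real.cos (thetaN n) * Real.sin ((2 * (l : ℝ) + 1) * thetaN n)) := by
  intro η hη i hi j hj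
  have hn4 : n % 4 = 2 := by omega
  have hn : 2 ≤ n := by omega
  have hl4 : 4 * l + 2 ≤ n := by omega
  have hEven : Even n := Nat.even_iff.2 (by omega)
  have hr := rN_nonneg n
  have hc := cosθ_nonneg n hn
  have hn0 : (n:ℝ) ≠ 0 := Nat.cast_ne_zero.2 (by omega)
  have hθ0 : 0 ≤ thetaN n := by unfold thetaN; positivity
  have hnθ : (n:ℝ) * thetaN n = π := by unfold thetaN; field_simp
  set k := n - 1 - l with hkdef
  -- trig facts about k
  have hkarg : (2 * (k:ℝ) + 1) * thetaN n = 2 * π - (2 * (l:ℝ) + 1) * thetaN n := by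
    have hk' : (k:ℝ) = (n:ℝ) - 1 - l := by
      rw [hkdef, show n - 1 - l = n - (1 + l) by omega, Nat.cast_sub (by omega)]
      push_cast; ring
    rw [hk', ← hnθ]; ring
  have hkc : Real.cos ((2 * (k:ℝ) + 1) * thetaN n)
      = Real.cos ((2 * (l:ℝ) + 1) * thetaN n) := by
    rw [hkarg, Real.cos_sub, Real.cos_two_pi, Real.sin_two_pi]; ring
  have hks : Real.sin ((2 * (k:ℝ) + 1) * thetaN n)
      = -Real.sin ((2 * (l:ℝ) + 1) * thetaN n) := by
    rw [hkarg, Real.sin_sub, Real.cos_two_pi, Real.sin_two_pi]; ring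
  -- sign facts about φ = (2l+1)θ
  have hφ0 : 0 ≤ (2 * (l:ℝ) + 1) * thetaN n := by positivity
  have hφle : (2 * (l:ℝ) + 1) * thetaN n ≤ π / 2 := by
    have h1 : (2*(l:ℝ)+1) ≤ (n:ℝ)/2 := by
      have : ((4*l+2 : ℕ):ℝ) ≤ (n:ℝ) := by exact_mod_cast hl4
      push_cast at this; linarith
    calc (2 * (l:ℝ) + 1) * thetaN n ≤ ((n:ℝ)/2) * thetaN n :=
          mul_le_mul_of_nonneg_right h1 hθ0
      _ = π / 2 := by rw [div_mul_eq_mul_div, hnθ]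
  have hφc : 0 ≤ Real.cos ((2 * (l:ℝ) + 1) * thetaN n) :=
    Real.cos_nonneg_of_mem_Icc ⟨by linarith [Real.pi_pos], hφle⟩
  have hφs : 0 ≤ Real.sin ((2 * (l:ℝ) + 1) * thetaN n) :=
    Real.sin_nonneg_of_nonneg_of_le_pi hφ0 (by linarith [Real.pi_pos])
  -- state facts
  obtain ⟨hpos, hnorm⟩ := hη
  have hdual : ∀ f ∈ EffN n, f ∈ VdualN n :=
    fun f hf => ⟨1, zero_le_one, f, hf, (one_smul ℝ f).symm⟩
  have hP : ∀ a : ℕ, η (eN n a) ∈ VposN n :=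
    fun a => hpos _ (hdual _ (eN_mem n hn4 a))
  have hQ : ∀ a : ℕ, η (eBarN n a) ∈ VposN n :=
    fun a => hpos _ (hdual _ (eBarN_mem n hn4 a))
  have hu2 : (η uEff) 2 = 1 := by
    rw [dot3_comp] at hnorm
    simpa [uEff] using hnorm
  have hsum : ∀ a : ℕ, (η (eN n a)) 2 + (η (eBarN n a)) 2 = 1 := by
    intro a
    have he : eN n a + eBarN n a = uEff := by
      funext x; simp [eBarN]
    have h := congrFun (congrArg (⇑η) he.symm) 2
    rw [map_add] at h
    simpa [hu2] using h.symm
  have hXbound : ∀ a : ℕ, (η (eN n a)) 0 - (η (eBarN n a)) 0 ≤ rN n := by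
    intro a
    obtain ⟨hp2, hp0, hp1⟩ := vpos_bound n hn4 _ (hP a)
    obtain ⟨hq2, hq0, hq1⟩ := vpos_bound n hn4 _ (hQ a)
    have hs := hsum a
    have h1 := (abs_le.1 hp0).2
    have h2 := (abs_le.1 hq0).1
    have : rN n * (η (eN n a)) 2 + rN n * (η (eBarN n a)) 2 = rN n := by
      rw [← mul_add, hs, mul_one]
    linarith
  have hYbound : ∀ a : ℕ, |(η (eN n a)) 1 - (η (eBarN n a)) 1|
      ≤ rN n * Real.cos (thetaN n) := by
    intro a
    obtain ⟨hp2, hp0, hp1⟩ := vpos_bound n hn4 _ (hP a)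
    obtain ⟨hq2, hq0, hq1⟩ := vpos_bound n hn4 _ (hQ a)
    have hs := hsum a
    have h1 := abs_le.1 hp1
    have h2 := abs_le.1 hq1
    have : rN n * Real.cos (thetaN n) * (η (eN n a)) 2
        + rN n * Real.cos (thetaN n) * (η (eBarN n a)) 2
        = rN n * Real.cos (thetaN n) := by
      rw [← mul_add, hs, mul_one]
    rw [abs_le]
    constructor <;> linarith [h1.1, h1.2, h2.1, h2.2]
  -- component formulas for the Bell-side effects
  have hcomp0 : ∀ a : ℕ, eN n a 0 = 1/2 * (rN n * Real.cos ((2*(a:ℝ)+1) * thetaN n)) := by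
    intro a; simp [eN, hEven]
  have hcomp1 : ∀ a : ℕ, eN n a 1 = 1/2 * (rN n * Real.sin ((2*(a:ℝ)+1) * thetaN n)) := by
    intro a; simp [eN, hEven]
  have hcomp2 : ∀ a : ℕ, eN n a 2 = 1/2 := by
    intro a; simp [eN, hEven]
  have hbcomp0 : ∀ a : ℕ, eBarN n a 0 = -(1/2 * (rN n * Real.cos ((2*(a:ℝ)+1) * thetaN n))) := by
    intro a; simp [eBarN, uEff, hcomp0 a]
  have hbcomp1 : ∀ a : ℕ, eBarN n a 1 = -(1/2 * (rN n * Real.sin ((2*(a:ℝ)+1) * thetaN n))) := by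
    intro a; simp [eBarN, uEff, hcomp1 a]
  have hbcomp2 : ∀ a : ℕ, eBarN n a 2 = 1/2 := by
    intro a; simp [eBarN, uEff, hcomp2 a]; norm_num
  -- the CHSH identity
  have hId : CHSH η (EObs n i) (EObs n j) (EObs n k) (EObs n l)
      = (2 * rN n * Real.cos ((2 * (l:ℝ) + 1) * thetaN n))
          * ((η (eN n i)) 0 - (η (eBarN n i)) 0)
        - (2 * rN n * Real.sin ((2 * (l:ℝ) + 1) * thetaN n))
          * ((η (eN n j)) 1 - (η (eBarN n j)) 1) := by
    simp only [CHSH, corr, EObs, dot3_comp, hcomp0, hcomp1, hcomp2,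
      hbcomp0, hbcomp1, hbcomp2, hkc, hks]
    ring
  rw [hId]
  have t1 : (2 * rN n * Real.cos ((2 * (l:ℝ) + 1) * thetaN n))
      * ((η (eN n i)) 0 - (η (eBarN n i)) 0)
      ≤ (2 * rN n * Real.cos ((2 * (l:ℝ) + 1) * thetaN n)) * rN n :=
    mul_le_mul_of_nonneg_left (hXbound i) (by positivity)
  have t2 : -((2 * rN n * Real.sin ((2 * (l:ℝ) + 1) * thetaN n))
      * ((η (eN n j)) 1 - (η (eBarN n j)) 1))
      ≤ (2 * rN n * Real.sin ((2 * (l:ℝ) + 1) * thetaN n))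
        * (rN n * Real.cos (thetaN n)) := by
    have hcoef : 0 ≤ 2 * rN n * Real.sin ((2 * (l:ℝ) + 1) * thetaN n) := by positivity
    have hb := (abs_le.1 (hYbound j)).1
    nlinarith [mul_le_mul_of_nonneg_left hb hcoef]
  have hfinal : (2 * rN n * Real.cos ((2 * (l:ℝ) + 1) * thetaN n)) * rN n
      + (2 * rN n * Real.sin ((2 * (l:ℝ) + 1) * thetaN n)) * (rN n * Real.cos (thetaN n))
      = 2 * rN n ^ 2 * (Real.cos ((2 * (l : ℝ) + 1) * thetaN n)
        + Real.cos (thetaN n) * Real.sin ((2 * (l : ℝ) + 1) * thetaN n)) := by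
    ring
  linarith
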